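/- Let R be an n×n correlation matrix and, for 1 < p ≤ 2, define r_p = ((∑_{i≠j} |r_{ij}|^p)/(n(n-1)))^{1/p}. Then det R ≤ (1-r_p)^{n-1}(1+(n-1)r_p). -/

import Mathlib

open Matrix BigOperators

lemma le_of_deriv_nonneg' (f f' : ℝ → ℝ) (u v : ℝ) (huv : u ≤ v)
    (hd : ∀ x ∈ Set.Icc u v, HasDerivAt f (f' x) x)
    (h0 : ∀ x ∈ Set.Ioo u v, 0 ≤ f' x) : f u ≤ f v := by
  have hmono := monotoneOn_of_deriv_nonneg (convex_Icc u v)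
    (fun x hx => (hd x hx).continuousAt.continuousWithinAt)
    (fun x hx => by
      rw [interior_Icc] at hx
      exact ((hd x (Set.Ioo_subset_Icc_self hx)).differentiableAt).differentiableWithinAt)
    (fun x hx => by
      rw [interior_Icc] at hx
      rw [(hd x (Set.Ioo_subset_Icc_self hx)).deriv]
      exact h0 x hx)
  exact hmono (Set.left_mem_Icc.2 huv) (Set.right_mem_Icc.2 huv) huv

lemma phi_ineq (t : ℝ) (ht : 1 ≤ t) : 0 ≤ t^2 - 4*t + 3 + 2*Real.log t := by
  have h := le_of_deriv_nonneg' (fun x => x^2 - 4*x + 3 + 2*Real.log x)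
    (fun x => 2*x - 4 + 2/x) 1 t ht
    (fun x hx => by
      have hx0 : (0:ℝ) < x := lt_of_lt_of_le one_pos hx.1
      have h1 : HasDerivAt (fun x : ℝ => x^2 - 4*x + 3 + 2*Real.log x)
          (2*x - 4 + 0 + 2*(1/x)) x := by
        have := ((hasDerivAt_pow 2 x).sub ((hasDerivAt_id x).const_mul 4)).add_const 3
        have hl := (Real.hasDerivAt_log (ne_of_gt hx0)).const_mul 2
        exact (this.add hl).congr_deriv (by norm_num)
      convert h1 using 1
      field_simp
      ring)
    (fun x hx => by
      have hx1 : (1:ℝ) < x := hx.1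
      have hx0 : (0:ℝ) < x := lt_trans one_pos hx1
      have : 0 ≤ 2*(x-1)^2 / x := by positivity
      have he : 2*x - 4 + 2/x = 2*(x-1)^2/x := by field_simp; ring
      linarith [he ▸ this])
  norm_num at h
  linarith

lemma psi_ineq (t : ℝ) (ht : 1 ≤ t) : 2*t*Real.log t ≤ t^2 - 1 := by
  have h := le_of_deriv_nonneg' (fun x => x^2 - 1 - 2*x*Real.log x)
    (fun x => 2*x - 2*Real.log x - 2) 1 t ht
    (fun x hx => by
      have hx0 : (0:ℝ) < x := lt_of_lt_of_le one_pos hx.1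
      have h1 : HasDerivAt (fun x : ℝ => x^2 - 1 - 2*x*Real.log x)
          (2*x - (2*Real.log x + 2*x*(1/x))) x := by
        have hp : HasDerivAt (fun x : ℝ => x^2 - 1) (2*x) x := by
          simpa using (hasDerivAt_pow 2 x).sub_const 1
        have hq : HasDerivAt (fun x : ℝ => 2*x*Real.log x) (2*Real.log x + 2*x*(1/x)) x := by
          have := ((hasDerivAt_id x).const_mul 2).mul (Real.hasDerivAt_log (ne_of_gt hx0))
          exact this.congr_deriv (by simp)
        exact hp.sub hq
      convert h1 using 1
      field_simp
      ring)
    (fun x hx => by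
      have hx1 : (1:ℝ) < x := hx.1
      have hx0 : (0:ℝ) < x := lt_trans one_pos hx1
      have hl : Real.log x ≤ x - 1 := Real.log_le_sub_one_of_pos hx0
      linarith)
  simp at h
  linarith

lemma le_of_deriv_nonpos' (f f' : ℝ → ℝ) (u v : ℝ) (huv : u ≤ v)
    (hd : ∀ x ∈ Set.Icc u v, HasDerivAt f (f' x) x)
    (h0 : ∀ x ∈ Set.Ioo u v, f' x ≤ 0) : f v ≤ f u := by
  have := le_of_deriv_nonneg' (fun x => -f x) (fun x => -f' x) u v huv
    (fun x hx => (hd x hx).neg) (fun x hx => neg_nonneg.2 (h0 x hx))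
  linarith


set_option maxHeartbeats 1000000 in
lemma tangent_line (a b B C : ℝ) (ha : 0 < a) (hab : a < b)
    (hC : C = ((Real.log b - Real.log a)/(b-a) - 1/a)/(b-a))
    (hB : B = 1/a - 2*C*a) :
    ∀ x : ℝ, 0 < x → x ≤ b →
      Real.log x ≤ Real.log a + B*(x-a) + C*(x^2-a^2) := by
  have hb : 0 < b := lt_trans ha hab
  have hba : 0 < b - a := sub_pos.2 hab
  set Λ : ℝ := Real.log b - Real.log a with hΛdef
  have hta : (1:ℝ) < b/a := (one_lt_div ha).2 hab
  have hlog_div : Real.log (b/a) = Λ := Real.log_div hb.ne' ha.ne'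
  have hΛ : a * Λ < b - a := by
    have h := Real.log_lt_sub_one_of_pos (show (0:ℝ) < b/a by positivity) (ne_of_gt hta)
    rw [hlog_div] at h
    have := (mul_lt_mul_iff_right₀ ha).2 h
    calc a * Λ < a * (b/a - 1) := this
      _ = b - a := by field_simp
  have hden : 0 < (b - a) - a * Λ := by linarith
  set c : ℝ := (b-a)^2/(2*((b-a) - a*Λ)) with hcdef
  have hcpos : 0 < c := by positivity
  -- phi inequality scaled
  have hphi := phi_ineq (b/a) (le_of_lt hta)
  rw [hlog_div] at hphi
  have hphi2 : 0 ≤ b^2 - 4*a*b + 3*a^2 + 2*a^2*Λ := by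
    have e : ((b/a)^2 - 4*(b/a) + 3 + 2*Λ) * a^2 = b^2 - 4*a*b + 3*a^2 + 2*a^2*Λ := by
      field_simp
    have := mul_nonneg hphi (sq_nonneg a)
    rw [e] at this
    exact this
  have hpsi := psi_ineq (b/a) (le_of_lt hta)
  rw [hlog_div] at hpsi
  have hpsi2 : 2*a*b*Λ ≤ b^2 - a^2 := by
    have e : (2*(b/a)*Λ) * a^2 = 2*a*b*Λ := by field_simp
    have e2 : ((b/a)^2 - 1) * a^2 = b^2 - a^2 := by field_simp
    have := mul_le_mul_of_nonneg_right hpsi (sq_nonneg a)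
    rw [e, e2] at this
    exact this
  have hac : a ≤ c := by
    rw [hcdef, le_div_iff₀ (by positivity)]
    nlinarith
  have hcb : c ≤ b := by
    rw [hcdef, div_le_iff₀ (by positivity)]
    nlinarith
  have hCneg : C < 0 := by
    have hCval : C * ((b-a)^2 * a) = a*Λ - (b-a) := by
      rw [hC]; field_simp
    nlinarith [sq_nonneg (b-a), mul_pos (mul_pos hba hba) ha]
  -- key identity for g at b
  have hgb : Real.log b = Real.log a + B*(b-a) + C*(b^2-a^2) := by
    rw [hB, hC]
    field_simp
    ring
  -- factorization of derivative numerator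
  have hq : ∀ y : ℝ, 0 < y → (y⁻¹ - (B + C*(2*y))) * y = (-2*C)*(y-a)*(y-c) := by
    intro y hy
    rw [hB, hC, hcdef]
    field_simp
    ring
  set g : ℝ → ℝ := fun x => Real.log x - (Real.log a + B*(x-a) + C*(x^2-a^2)) with hgdef
  set g' : ℝ → ℝ := fun x => x⁻¹ - (B + C*(2*x)) with hg'def
  have hd : ∀ y : ℝ, 0 < y → HasDerivAt g (g' y) y := by
    intro y hy
    have h1 : HasDerivAt (fun x:ℝ => x - a) 1 y := (hasDerivAt_id y).sub_const a
    have h2 : HasDerivAt (fun x:ℝ => x^2 - a^2) (2*y) y := by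
      simpa using (hasDerivAt_pow 2 y).sub_const (a^2)
    have hpoly : HasDerivAt (fun x => Real.log a + B*(x-a) + C*(x^2-a^2)) (B + C*(2*y)) y := by
      have := (((h1.const_mul B).const_add (Real.log a)).add (h2.const_mul C))
      exact this.congr_deriv (by ring)
    exact (Real.hasDerivAt_log hy.ne').sub hpoly
  have hga : g a = 0 := by
    show Real.log a - (Real.log a + B*(a-a) + C*(a^2-a^2)) = 0
    ring
  have hgb0 : g b = 0 := by
    show Real.log b - (Real.log a + B*(b-a) + C*(b^2-a^2)) = 0
    linarith [hgb]
  intro x hx0 hxb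
  suffices hsuf : g x ≤ 0 by
    have : Real.log x - (Real.log a + B*(x-a) + C*(x^2-a^2)) ≤ 0 := hsuf
    linarith
  rcases le_or_gt x a with hxa | hax
  · have := le_of_deriv_nonneg' g g' x a hxa
      (fun y hy => hd y (lt_of_lt_of_le hx0 hy.1))
      (fun y hy => by
        have hy0 : 0 < y := lt_trans hx0 hy.1
        have hyq := hq y hy0
        have e : (-2*C)*(y-a)*(y-c) = (-2*C)*((a-y)*(c-y)) := by ring
        have h1 : 0 ≤ (-2*C)*(y-a)*(y-c) := by
          rw [e]
          exact mul_nonneg (by linarith) (mul_nonneg (by linarith [hy.2]) (by linarith [hy.2, hac]))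
        show 0 ≤ y⁻¹ - (B + C*(2*y))
        nlinarith)
    linarith [hga]
  · rcases le_or_gt x c with hxc | hcx
    · have := le_of_deriv_nonpos' g g' a x (le_of_lt hax)
        (fun y hy => hd y (lt_of_lt_of_le ha hy.1))
        (fun y hy => by
          have hy0 : 0 < y := lt_trans ha hy.1
          have hyq := hq y hy0
          have e : (-2*C)*(y-a)*(y-c) = -((-2*C)*((y-a)*(c-y))) := by ring
          have h1 : (-2*C)*(y-a)*(y-c) ≤ 0 := by
            rw [e]
            exact neg_nonpos.2 (mul_nonneg (by linarith) (mul_nonneg (by linarith [hy.1]) (by linarith [hy.2, hxc])))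
          show y⁻¹ - (B + C*(2*y)) ≤ 0
          nlinarith)
      linarith [hga]
    · have := le_of_deriv_nonneg' g g' x b hxb
        (fun y hy => hd y (lt_of_lt_of_le hx0 hy.1))
        (fun y hy => by
          have hy0 : 0 < y := lt_trans hx0 hy.1
          have hyq := hq y hy0
          have h1 : 0 ≤ (-2*C)*(y-a)*(y-c) := by
            exact mul_nonneg (mul_nonneg (by linarith) (by linarith [hy.1, hac, hcx])) (by linarith [hy.1, hcx])
          show 0 ≤ y⁻¹ - (B + C*(2*y))
          nlinarith)
      linarith [hgb0]

lemma prod_le_bound (n : ℕ) (hn : 2 ≤ n) (lam : Fin n → ℝ) (hnn : ∀ i, 0 ≤ lam i)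
    (h1 : ∑ i, lam i = n) (r : ℝ) (hr0 : 0 < r) (hr1 : r ≤ 1)
    (h2 : ∑ i, (lam i)^2 = n + n*((n:ℝ)-1)*r^2) :
    ∏ i, lam i ≤ (1-r)^(n-1) * (1+((n:ℝ)-1)*r) := by
  have hn1 : (1:ℝ) ≤ (n:ℝ) - 1 := by
    have : (2:ℝ) ≤ (n:ℝ) := by exact_mod_cast hn
    linarith
  have hnpos : (0:ℝ) < n := by linarith
  rcases eq_or_lt_of_le hr1 with hr1e | hr1lt
  · -- r = 1 : RHS = 0, show some eigenvalue is 0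
    subst hr1e
    have hub : ∀ i, lam i ≤ (n:ℝ) := by
      intro i
      rw [← h1]
      exact Finset.single_le_sum (fun j _ => hnn j) (Finset.mem_univ i)
    have hsum0 : ∑ i, lam i * ((n:ℝ) - lam i) = 0 := by
      have : ∑ i, lam i * ((n:ℝ) - lam i) = (n:ℝ) * (∑ i, lam i) - ∑ i, (lam i)^2 := by
        rw [Finset.mul_sum, ← Finset.sum_sub_distrib]
        exact Finset.sum_congr rfl (fun i _ => by ring)
      rw [this, h1, h2]
      ring
    have hterm : ∀ i ∈ Finset.univ, lam i * ((n:ℝ) - lam i) = 0 :=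
      (Finset.sum_eq_zero_iff_of_nonneg
        (fun i _ => mul_nonneg (hnn i) (by linarith [hub i]))).1 hsum0
    have hex : ∃ i, lam i = 0 := by
      by_contra hno
      push_neg at hno
      have hall : ∀ i, lam i = (n:ℝ) := by
        intro i
        have := hterm i (Finset.mem_univ i)
        rcases mul_eq_zero.1 this with h | h
        · exact absurd h (hno i)
        · linarith
      have : ∑ i, lam i = (n:ℝ) * (n:ℝ) := by
        rw [Finset.sum_congr rfl (fun i _ => hall i), Finset.sum_const,
          Finset.card_univ, Fintype.card_fin, nsmul_eq_mul]
      rw [h1] at this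
      have h2n : (2:ℝ) ≤ (n:ℝ) := by exact_mod_cast hn
      nlinarith
    obtain ⟨i, hi⟩ := hex
    rw [Finset.prod_eq_zero (Finset.mem_univ i) hi]
    have hpow : (1 - (1:ℝ))^(n-1) = 0 := by
      rw [sub_self, zero_pow]
      omega
    rw [hpow, zero_mul]
  · -- r < 1
    set a : ℝ := 1 - r with hadef
    set b : ℝ := 1 + ((n:ℝ)-1)*r with hbdef
    have ha : 0 < a := by simp [hadef]; linarith
    have hb : 0 < b := by positivity
    have hab : a < b := by
      have : (0:ℝ) < (n:ℝ)*r := by positivity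
      simp only [hadef, hbdef]; nlinarith
    by_cases hzero : ∃ i, lam i = 0
    · obtain ⟨i, hi⟩ := hzero
      rw [Finset.prod_eq_zero (Finset.mem_univ i) hi]
      positivity
    · push_neg at hzero
      have hpos : ∀ i, 0 < lam i := fun i => lt_of_le_of_ne (hnn i) (Ne.symm (hzero i))
      -- each lam i ≤ b
      have hub : ∀ i, lam i ≤ b := by
        intro i
        have hmem : i ∈ Finset.univ := Finset.mem_univ i
        have hcs := sq_sum_le_card_mul_sum_sq (s := Finset.univ.erase i) (f := lam)
        have hcard : (Finset.univ.erase i).card = n - 1 := by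
          rw [Finset.card_erase_of_mem hmem, Finset.card_univ, Fintype.card_fin]
        have hsum_erase : ∑ j ∈ Finset.univ.erase i, lam j = (n:ℝ) - lam i := by
          rw [Finset.sum_erase_eq_sub hmem, h1]
        have hsq_erase : ∑ j ∈ Finset.univ.erase i, (lam j)^2
            = (n:ℝ) + n*((n:ℝ)-1)*r^2 - (lam i)^2 := by
          rw [Finset.sum_erase_eq_sub hmem, h2]
        rw [hcard, hsum_erase, hsq_erase] at hcs
        have hcast : ((n - 1 : ℕ) : ℝ) = (n:ℝ) - 1 := by
          have := Nat.cast_sub (le_trans (by norm_num) hn) (R := ℝ) (m := 1) (n := n)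
          simpa using this
        rw [hcast] at hcs
        -- (lam i - 1)^2 ≤ ((n-1) r)^2
        have hkey : (lam i - 1)^2 ≤ (((n:ℝ)-1)*r)^2 := by nlinarith [hcs]
        have hnr : 0 ≤ ((n:ℝ)-1)*r := by positivity
        simp only [hbdef]
        nlinarith [hkey, hnr]
      set C : ℝ := ((Real.log b - Real.log a)/(b-a) - 1/a)/(b-a) with hCdef
      set B : ℝ := 1/a - 2*C*a with hBdef
      have htang := tangent_line a b B C ha hab hCdef hBdef
      have hlog : ∀ i, Real.log (lam i) ≤ Real.log a + B*(lam i - a) + C*((lam i)^2 - a^2) :=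
        fun i => htang (lam i) (hpos i) (hub i)
      have hsum_log : ∑ i, Real.log (lam i)
          ≤ (n:ℝ)*Real.log a + B*((n:ℝ) - n*a) + C*((n:ℝ) + n*((n:ℝ)-1)*r^2 - n*a^2) := by
        calc ∑ i, Real.log (lam i)
            ≤ ∑ i, (Real.log a + B*(lam i - a) + C*((lam i)^2 - a^2)) :=
              Finset.sum_le_sum (fun i _ => hlog i)
          _ = (n:ℝ)*Real.log a + B*((∑ i, lam i) - n*a) + C*((∑ i, (lam i)^2) - n*a^2) := by
              simp only [Finset.sum_add_distrib, Finset.sum_sub_distrib, Finset.sum_const,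
                Finset.card_univ, Fintype.card_fin, nsmul_eq_mul, ← Finset.mul_sum]
          _ = (n:ℝ)*Real.log a + B*((n:ℝ) - n*a) + C*((n:ℝ) + n*((n:ℝ)-1)*r^2 - n*a^2) := by
              rw [h1, h2]
      -- identities
      have hid1 : (n:ℝ) - n*a = b - a := by simp only [hadef, hbdef]; ring
      have hid2 : (n:ℝ) + n*((n:ℝ)-1)*r^2 - n*a^2 = b^2 - a^2 := by
        simp only [hadef, hbdef]; ring
      have hgb : Real.log b = Real.log a + B*(b-a) + C*(b^2-a^2) := by
        rw [hBdef, hCdef]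
        have hba : b - a ≠ 0 := ne_of_gt (sub_pos.2 hab)
        field_simp
        ring
      have hsum_log2 : ∑ i, Real.log (lam i) ≤ ((n:ℝ)-1)*Real.log a + Real.log b := by
        rw [hid1, hid2] at hsum_log
        linarith [hgb, hsum_log]
      -- exponentiate
      have hprod : ∏ i, lam i = Real.exp (∑ i, Real.log (lam i)) := by
        rw [Real.exp_sum]
        exact Finset.prod_congr rfl (fun i _ => (Real.exp_log (hpos i)).symm)
      rw [hprod]
      have hrhs : (1-r)^(n-1) * (1+((n:ℝ)-1)*r)
          = Real.exp (((n:ℝ)-1)*Real.log a + Real.log b) := by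
        rw [Real.exp_add, Real.exp_log hb]
        congr 1
        rw [← Real.exp_log (pow_pos ha (n-1)), Real.log_pow]
        congr 1
        have hcast : ((n - 1 : ℕ) : ℝ) = (n:ℝ) - 1 := by
          have := Nat.cast_sub (le_trans (by norm_num) hn) (R := ℝ) (m := 1) (n := n)
          simpa using this
        rw [hcast]
      rw [hrhs]
      exact Real.exp_le_exp.2 hsum_log2

lemma f_anti (m : ℕ) (hm : 1 ≤ m) (x y : ℝ) (hx : 0 ≤ x) (hxy : x ≤ y) (hy : y ≤ 1) :
    (1-y)^m * (1+(m:ℝ)*y) ≤ (1-x)^m * (1+(m:ℝ)*x) := by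
  have key := le_of_deriv_nonpos' (fun t => (1-t)^m * (1+(m:ℝ)*t))
    (fun t => ((m:ℝ)*(1-t)^(m-1)*(-1))*(1+(m:ℝ)*t) + (1-t)^m * (m:ℝ)) x y hxy
    (fun t _ => by
      have h1 : HasDerivAt (fun t:ℝ => 1-t) (-1) t := (hasDerivAt_id t).const_sub 1
      have hpow : HasDerivAt (fun t:ℝ => (1-t)^m) ((m:ℝ)*(1-t)^(m-1)*(-1)) t := by
        exact (h1.pow m).congr_deriv (by ring)
      have h2 : HasDerivAt (fun t:ℝ => 1+(m:ℝ)*t) (m:ℝ) t := by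
        simpa using ((hasDerivAt_id t).const_mul (m:ℝ)).const_add 1
      exact hpow.mul h2)
    (fun t ht => by
      have ht0 : 0 < t := lt_of_le_of_lt hx ht.1
      have ht1 : t < 1 := lt_of_lt_of_le ht.2 hy
      have hms : (1-t)^m = (1-t)^(m-1) * (1-t) := by
        conv_lhs => rw [← Nat.succ_pred_eq_of_pos hm]
        rw [pow_succ, Nat.pred_eq_sub_one]
      have hpnn : 0 ≤ (1-t)^(m-1) := pow_nonneg (by linarith) _
      have hm1 : (1:ℝ) ≤ (m:ℝ) := by exact_mod_cast hm
      rw [hms]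
      have hnn : 0 ≤ (m:ℝ) * (1-t)^(m-1) * (t*((m:ℝ)+1)) :=
        mul_nonneg (mul_nonneg (by linarith) hpnn) (by nlinarith)
      have heq : ((m:ℝ)*(1-t)^(m-1)*(-1))*(1+(m:ℝ)*t) + (1-t)^(m-1)*(1-t) * (m:ℝ)
          = -((m:ℝ) * (1-t)^(m-1) * (t*((m:ℝ)+1))) := by ring
      linarith [hnn, heq.le, heq.ge])
  exact key

lemma entry_sq_le (n : ℕ) (R : Matrix (Fin n) (Fin n) ℝ) (hpsd : R.PosSemidef)
    (hdiag : ∀ i, R i i = 1) (i j : Fin n) : (R i j)^2 ≤ 1 := by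
  have hsym : R j i = R i j := by
    have := congrFun (congrFun hpsd.1 i) j
    simpa [Matrix.conjTranspose_apply] using this
  set x : Fin n → ℝ := Pi.single i 1 + Pi.single j (-(R i j)) with hx
  have h := hpsd.dotProduct_mulVec_nonneg x
  have hmv : R *ᵥ x = fun k => R k i - R i j * R k j := by
    funext k
    simp [hx, Matrix.mulVec_add, Matrix.mulVec_single, mul_comm]
    ring
  rw [hmv] at h
  have hdot : dotProduct (star x) (fun k => R k i - R i j * R k j)
      = 1 - (R i j)^2 := by
    simp only [hx, dotProduct, Pi.add_apply, Pi.single_apply, star_trivial, add_mul,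
      Finset.sum_add_distrib, ite_mul, zero_mul, Finset.sum_ite_eq',
      Finset.mem_univ, if_true]
    rw [hdiag i, hdiag j, hsym]
    ring
  rw [hdot] at h
  linarith


theorem det_le_f_rp (n : ℕ) (hn : 2 ≤ n) (R : Matrix (Fin n) (Fin n) ℝ)
    (hpsd : R.PosSemidef) (hdiag : ∀ i, R i i = 1)
    (p : ℝ) (hp1 : 1 < p) (hp2 : p ≤ 2)
    (rp : ℝ)
    (hrp : rp = ((∑ i, ∑ j ∈ Finset.univ.erase i, |R i j| ^ p) / (n * (n - 1))) ^ (1 / p)) :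
    R.det ≤ (1 - rp) ^ (n - 1) * (1 + (n - 1 : ℝ) * rp) := by
  have hn2 : (2:ℝ) ≤ (n:ℝ) := by exact_mod_cast hn
  have hp0 : 0 < p := by linarith
  have hR : R.IsHermitian := hpsd.1
  have hsym : ∀ i j : Fin n, R j i = R i j := fun i j => by
    simpa [Matrix.conjTranspose_apply] using congrFun (congrFun hR i) j
  set lam : Fin n → ℝ := hR.eigenvalues with hlamdef
  have hnn : ∀ i, 0 ≤ lam i := fun i => hpsd.eigenvalues_nonneg i
  have hdet : R.det = ∏ i, lam i := by
    rw [hR.det_eq_prod_eigenvalues]; norm_num; rfl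
  -- trace identities
  have htr1 : ∑ i, lam i = (n:ℝ) := by
    have hA : R.trace = ∑ i, lam i := by
      conv_lhs => rw [hR.spectral_theorem, Unitary.conjStarAlgAut_apply]
      rw [Matrix.trace_mul_cycle, Unitary.coe_star_mul_self, Matrix.one_mul]
      simp [Matrix.trace_diagonal]
      rfl
    have hB : R.trace = (n:ℝ) := by simp [Matrix.trace, Matrix.diag, hdiag]
    rw [← hA, hB]
  set S : ℝ := ∑ i, ∑ j ∈ Finset.univ.erase i, (R i j)^2 with hSdef
  have htr2 : ∑ i, (lam i)^2 = (n:ℝ) + S := by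
    have hA : (R * R).trace = ∑ i, (lam i)^2 := by
      set U : Matrix (Fin n) (Fin n) ℝ := (hR.eigenvectorUnitary : Matrix (Fin n) (Fin n) ℝ)
      set D : Matrix (Fin n) (Fin n) ℝ := diagonal (RCLike.ofReal ∘ hR.eigenvalues)
      have hU : star U * U = 1 := Unitary.coe_star_mul_self _
      have hsp : R = U * D * star U := hR.spectral_theorem
      have h1 : R * R = U * (D * D) * star U := by
        rw [hsp]
        simp only [← Matrix.mul_assoc]
        rw [Matrix.mul_assoc (U*D) (star U) U, hU, Matrix.mul_one]
      rw [h1, Matrix.trace_mul_cycle, ← Matrix.mul_assoc, hU, Matrix.one_mul,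
        Matrix.diagonal_mul_diagonal]
      simp [Matrix.trace_diagonal, sq]
      rfl
    have hB : (R * R).trace = ∑ i, ∑ j, (R i j)^2 := by
      simp only [Matrix.trace, Matrix.diag, Matrix.mul_apply]
      exact Finset.sum_congr rfl fun i _ => Finset.sum_congr rfl fun j _ => by
        rw [hsym i j]; ring
    have hC : ∑ i, ∑ j, (R i j)^2 = (n:ℝ) + S := by
      have : ∀ i : Fin n, ∑ j, (R i j)^2
          = (∑ j ∈ Finset.univ.erase i, (R i j)^2) + 1 := by
        intro i
        rw [← Finset.sum_erase_add Finset.univ _ (Finset.mem_univ i), hdiag i]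
        norm_num
      rw [Finset.sum_congr rfl (fun i _ => this i), Finset.sum_add_distrib]
      simp [hSdef, add_comm]
    rw [← hA, hB, hC]
  set N : ℝ := (n:ℝ) * ((n:ℝ) - 1) with hNdef
  have hNpos : 0 < N := by rw [hNdef]; nlinarith
  have hS0 : 0 ≤ S := Finset.sum_nonneg fun i _ => Finset.sum_nonneg fun j _ => sq_nonneg _
  have hSleN : S ≤ N := by
    have hbound : ∀ i : Fin n, ∑ j ∈ Finset.univ.erase i, (R i j)^2 ≤ ((n:ℝ) - 1) := by
      intro i
      calc ∑ j ∈ Finset.univ.erase i, (R i j)^2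
          ≤ ∑ j ∈ Finset.univ.erase i, 1 :=
            Finset.sum_le_sum fun j _ => entry_sq_le n R hpsd hdiag i j
        _ = ((n:ℝ) - 1) := by
            rw [Finset.sum_const, Finset.card_erase_of_mem (Finset.mem_univ i),
              Finset.card_univ, Fintype.card_fin, nsmul_eq_mul, mul_one]
            have : ((n - 1 : ℕ) : ℝ) = (n:ℝ) - 1 := by
              have := Nat.cast_sub (le_trans (by norm_num) hn) (R := ℝ) (m := 1) (n := n)
              simpa using this
            rw [this]
    calc S ≤ ∑ _i : Fin n, ((n:ℝ) - 1) := Finset.sum_le_sum fun i _ => hbound i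
      _ = N := by rw [Finset.sum_const, Finset.card_univ, Fintype.card_fin, nsmul_eq_mul, hNdef]
  set r2 : ℝ := Real.sqrt (S / N) with hr2def
  have hr2nn : 0 ≤ r2 := Real.sqrt_nonneg _
  have hr2sq : r2^2 = S / N := Real.sq_sqrt (div_nonneg hS0 hNpos.le)
  have hr2le1 : r2 ≤ 1 := by
    rw [hr2def]
    rw [show (1:ℝ) = Real.sqrt 1 by simp]
    exact Real.sqrt_le_sqrt (by rw [div_le_one hNpos]; exact hSleN)
  have h2' : ∑ i, (lam i)^2 = (n:ℝ) + (n:ℝ)*((n:ℝ)-1)*r2^2 := by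
    rw [htr2, hr2sq, ← hNdef]
    field_simp
  -- power mean : rp ≤ r2
  set Sp : ℝ := ∑ i, ∑ j ∈ Finset.univ.erase i, |R i j| ^ p with hSpdef
  have hSp0 : 0 ≤ Sp := Finset.sum_nonneg fun i _ => Finset.sum_nonneg fun j _ =>
    Real.rpow_nonneg (abs_nonneg _) p
  have hrp_eq : rp = (Sp / N) ^ (1/p) := by rw [hrp]
  have hrp0 : 0 ≤ rp := by
    rw [hrp_eq]; exact Real.rpow_nonneg (div_nonneg hSp0 hNpos.le) _
  have hrple : rp ≤ r2 := by
    set T : Finset ((_ : Fin n) × Fin n) :=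
      Finset.univ.sigma (fun i => Finset.univ.erase i) with hTdef
    have hTcard : (T.card : ℝ) = N := by
      rw [hTdef, Finset.card_sigma]
      have : ∀ i : Fin n, (Finset.univ.erase i).card = n - 1 := fun i => by
        rw [Finset.card_erase_of_mem (Finset.mem_univ i), Finset.card_univ, Fintype.card_fin]
      rw [Finset.sum_congr rfl (fun i _ => this i), Finset.sum_const, Finset.card_univ,
        Fintype.card_fin, smul_eq_mul]
      push_cast [Nat.cast_sub (le_trans (by norm_num : 1 ≤ 2) hn)]
      rw [hNdef]
    have hSp' : Sp = ∑ q ∈ T, |R q.1 q.2| ^ p := by rw [hSpdef, hTdef, Finset.sum_sigma]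
    have hS' : S = ∑ q ∈ T, (R q.1 q.2)^2 := by rw [hSdef, hTdef, Finset.sum_sigma]
    have hq1 : (1:ℝ) ≤ 2/p := by rw [le_div_iff₀ hp0]; linarith
    have jensen := Real.rpow_arith_mean_le_arith_mean_rpow T (fun _ => 1/N)
      (fun q => |R q.1 q.2| ^ p) (fun i _ => by positivity)
      (by rw [Finset.sum_const, nsmul_eq_mul, hTcard]; field_simp)
      (fun i _ => Real.rpow_nonneg (abs_nonneg _) p) hq1
    have hlhs : ∑ q ∈ T, (1/N) * |R q.1 q.2| ^ p = Sp / N := by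
      rw [← Finset.mul_sum, ← hSp']; field_simp
    have hrhs : ∑ q ∈ T, (1/N) * (|R q.1 q.2| ^ p) ^ (2/p) = S / N := by
      have : ∀ q : (_ : Fin n) × Fin n, (|R q.1 q.2| ^ p) ^ (2/p) = (R q.1 q.2)^2 := by
        intro q
        rw [← Real.rpow_mul (abs_nonneg _), mul_div_cancel₀ _ hp0.ne', Real.rpow_two, sq_abs]
      rw [Finset.sum_congr rfl (fun q _ => by rw [this q]), ← Finset.mul_sum, ← hS']
      field_simp
    rw [hlhs, hrhs] at jensen
    have key : (Sp/N) ^ ((2:ℝ)/p) ≤ S/N := jensen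
    have h1 : rp = ((Sp/N) ^ ((2:ℝ)/p)) ^ ((1:ℝ)/2) := by
      rw [hrp_eq, ← Real.rpow_mul (div_nonneg hSp0 hNpos.le)]
      norm_num
    rw [h1, hr2def, Real.sqrt_eq_rpow]
    exact Real.rpow_le_rpow (Real.rpow_nonneg (div_nonneg hSp0 hNpos.le) _) key (by norm_num)
  -- final
  rcases eq_or_lt_of_le hr2nn with hr2zero | hr2pos
  · -- r2 = 0 : all eigenvalues are 1
    have hrp_zero : rp = 0 := le_antisymm (hr2zero ▸ hrple) hrp0
    have hsq_zero : ∑ i, (lam i - 1)^2 = 0 := by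
      have : ∑ i, (lam i - 1)^2 = (∑ i, (lam i)^2) - 2*(∑ i, lam i) + n := by
        rw [Finset.sum_congr rfl (fun i _ => by ring : ∀ i ∈ Finset.univ,
          (lam i - 1)^2 = (lam i)^2 - 2*(lam i) + 1)]
        rw [Finset.sum_add_distrib, Finset.sum_sub_distrib, ← Finset.mul_sum, Finset.sum_const,
          Finset.card_univ, Fintype.card_fin, nsmul_eq_mul, mul_one]
      rw [this, htr1, h2', ← hr2zero]
      ring
    have hall : ∀ i, lam i = 1 := by
      intro i
      have := (Finset.sum_eq_zero_iff_of_nonneg (fun i _ => sq_nonneg (lam i - 1))).1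
        hsq_zero i (Finset.mem_univ i)
      have h2 : lam i - 1 = 0 := by
        exact pow_eq_zero_iff (by norm_num) |>.1 this
      linarith
    rw [hdet, Finset.prod_congr rfl (fun i _ => hall i), Finset.prod_const, one_pow,
      hrp_zero]
    norm_num
  · have hmain := prod_le_bound n hn lam hnn htr1 r2 hr2pos hr2le1 h2'
    have hcast : ((n - 1 : ℕ) : ℝ) = (n:ℝ) - 1 := by
      have := Nat.cast_sub (le_trans (by norm_num : 1 ≤ 2) hn) (R := ℝ) (m := 1) (n := n)
      simpa using this
    have hanti := f_anti (n-1) (by omega) rp r2 hrp0 hrple hr2le1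
    rw [hcast] at hanti
    rw [hdet]
    calc ∏ i, lam i ≤ (1-r2)^(n-1) * (1+((n:ℝ)-1)*r2) := hmain
      _ ≤ (1-rp)^(n-1) * (1+((n:ℝ)-1)*rp) := hanti
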